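/- Let W : ℂ → ℂ be holomorphic on ℂ ∖ {0}, and suppose there are C ≥ 0 and k ∈ ℕ with |W(σ)| ≤ C·(1 + | log|σ| |)^k for all σ ≠ 0. Then W is constant on ℂ ∖ {0}. -/

import Mathlib

open Filter Topology Asymptotics Set Metric

private lemma polylog_aux (k : ℕ) :
    Tendsto (fun x : ℝ => (1 + Real.log x) ^ k / x) atTop (𝓝 0) := by
  have h1 : Tendsto (fun t : ℝ => (1 + t) ^ k * Real.exp (-(1 + t))) atTop (𝓝 0) :=
    (Real.tendsto_pow_mul_exp_neg_atTop_nhds_zero k).comp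
      (tendsto_atTop_add_const_left _ 1 tendsto_id)
  have h2 : Tendsto (fun t : ℝ => (1 + t) ^ k * Real.exp (-t)) atTop (𝓝 0) := by
    have h := h1.const_mul (Real.exp 1)
    rw [mul_zero] at h
    refine h.congr fun t => ?_
    rw [mul_left_comm, ← Real.exp_add]
    congr 2
    ring
  have h3 := h2.comp Real.tendsto_log_atTop
  refine h3.congr' ?_
  filter_upwards [eventually_gt_atTop (0 : ℝ)] with x hx
  simp only [Function.comp_apply]
  rw [Real.exp_neg, Real.exp_log hx, div_eq_mul_inv]

/-- The sub-meromorphic growth Liouville step (Res28) used in Corollaries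
Dcor:2 and Dcor:3: a holomorphic function on the punctured plane with
polylogarithmic growth at both `0` and `∞` is constant. -/
theorem polylog_growth_constant
    (W : ℂ → ℂ) (hW : DifferentiableOn ℂ W {σ : ℂ | σ ≠ 0})
    (C : ℝ) (hC : 0 ≤ C) (k : ℕ)
    (hb : ∀ σ : ℂ, σ ≠ 0 → ‖W σ‖ ≤ C * (1 + |Real.log (‖σ‖)|) ^ k) :
    ∀ σ τ : ℂ, σ ≠ 0 → τ ≠ 0 → W σ = W τ := by
  set M : ℝ := ‖W 0‖ with hM
  -- Step 1: little-o bound at 0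
  have habs : Tendsto (fun z : ℂ => ‖z‖) (𝓝[≠] (0:ℂ)) (𝓝[>] (0:ℝ)) := by
    apply tendsto_nhdsWithin_of_tendsto_nhds_of_eventually_within
    · simpa using (continuous_norm.tendsto (0:ℂ)).mono_left nhdsWithin_le_nhds
    · filter_upwards [self_mem_nhdsWithin] with z hz
      exact norm_pos_iff.mpr hz
  have tend0 : Tendsto (fun r : ℝ => (C * (1 + |Real.log r|) ^ k + M) * r)
      (𝓝[>] (0:ℝ)) (𝓝 0) := by
    have hinv : Tendsto (fun r : ℝ => r⁻¹) (𝓝[>] (0:ℝ)) atTop := tendsto_inv_nhdsGT_zero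
    have h1 : Tendsto (fun r : ℝ => C * ((1 + Real.log r⁻¹) ^ k / r⁻¹)) (𝓝[>] (0:ℝ)) (𝓝 0) := by
      have := ((polylog_aux k).comp hinv).const_mul C
      rwa [mul_zero] at this
    have h2 : Tendsto (fun r : ℝ => M * r) (𝓝[>] (0:ℝ)) (𝓝 0) := by
      have h : Tendsto (fun r : ℝ => M * r) (𝓝 (0:ℝ)) (𝓝 (M * 0)) :=
        (continuous_const.mul continuous_id).tendsto 0
      rw [mul_zero] at h
      exact h.mono_left nhdsWithin_le_nhds
    have h3 := h1.add h2
    rw [add_zero] at h3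
    refine h3.congr' ?_
    filter_upwards [Ioo_mem_nhdsGT_of_mem (by norm_num : (0:ℝ) ∈ Ico 0 1)] with r hr
    have hr0 : 0 < r := hr.1
    have hlog : |Real.log r| = Real.log r⁻¹ := by
      rw [Real.log_inv, abs_of_nonpos (Real.log_nonpos hr0.le hr.2.le)]
    rw [hlog]
    field_simp
  have ho : (fun z : ℂ => W z - W 0) =o[𝓝[≠] (0:ℂ)] fun z => (z - 0)⁻¹ := by
    rw [Asymptotics.isLittleO_iff_tendsto']
    · rw [tendsto_zero_iff_norm_tendsto_zero]
      refine squeeze_zero'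
        (g := fun z : ℂ => (C * (1 + |Real.log (‖z‖)|) ^ k + M) * ‖z‖)
        (by filter_upwards with z using norm_nonneg _) ?_ (tend0.comp habs)
      filter_upwards [self_mem_nhdsWithin] with z (hz : z ≠ 0)
      have heq : ‖(W z - W 0) / (z - 0)⁻¹‖ = ‖W z - W 0‖ * ‖z‖ := by
        rw [sub_zero, norm_div, norm_inv, div_eq_mul_inv, inv_inv]
      rw [heq]
      refine mul_le_mul_of_nonneg_right ?_ (norm_nonneg _)
      calc ‖W z - W 0‖ ≤ ‖W z‖ + ‖W 0‖ := norm_sub_le _ _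
        _ ≤ C * (1 + |Real.log (‖z‖)|) ^ k + M :=
            add_le_add_left (hb z hz) M
    · filter_upwards [self_mem_nhdsWithin] with z (hz : z ≠ 0) h
      exact absurd h (by simp [sub_eq_zero, hz])
  -- Step 2: extend to an entire function
  set g : ℂ → ℂ := Function.update W 0 (limUnder (𝓝[≠] (0:ℂ)) W) with hgdef
  have hgd : Differentiable ℂ g := by
    have h := Complex.differentiableOn_update_limUnder_insert_of_isLittleO
      (c := (0:ℂ)) (s := {σ : ℂ | σ ≠ 0}) self_mem_nhdsWithin hW ho
    have huniv : insert (0:ℂ) {σ : ℂ | σ ≠ 0} = Set.univ := by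
      ext z; by_cases hz : z = 0 <;> simp [hz]
    rw [huniv] at h
    exact differentiableOn_univ.mp h
  have hgW : ∀ z : ℂ, z ≠ 0 → g z = W z := fun z hz => Function.update_of_ne hz _ _
  -- Step 3: derivative is zero everywhere
  have hderiv : ∀ z : ℂ, deriv g z = 0 := by
    intro z
    have hzn : (0:ℝ) ≤ ‖z‖ := norm_nonneg _
    have hkey : ∀ᶠ R : ℝ in atTop,
        ‖deriv g z‖ ≤ C * (1 + Real.log (‖z‖ + R)) ^ k / R := by
      filter_upwards [eventually_ge_atTop (‖z‖ + 1)] with R hR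
      have hR1 : (1:ℝ) ≤ R := by linarith
      have hR0 : (0:ℝ) < R := lt_of_lt_of_le one_pos hR1
      refine Complex.norm_deriv_le_of_forall_mem_sphere_norm_le hR0
        (hgd.diffContOnCl) ?_
      intro w hw
      have hw' : ‖w - z‖ = R := mem_sphere_iff_norm.mp hw
      have htri : ‖w - z‖ ≤ ‖w‖ + ‖z‖ := by
        simpa using norm_sub_le w z
      have hw1 : (1:ℝ) ≤ ‖w‖ := by linarith
      have hwz : ‖w‖ ≤ ‖z‖ + R := by
        calc ‖w‖ = ‖z + (w - z)‖ := by congr 1; ring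
          _ ≤ ‖z‖ + ‖w - z‖ := norm_add_le _ _
          _ = ‖z‖ + R := by rw [hw']
      have hwne : w ≠ 0 := by
        intro h
        rw [h] at hw1
        simp at hw1
        linarith
      rw [hgW w hwne]
      refine (hb w hwne).trans ?_
      refine mul_le_mul_of_nonneg_left ?_ hC
      rw [abs_of_nonneg (Real.log_nonneg hw1)]
      have hln : 0 ≤ Real.log (‖w‖) := Real.log_nonneg hw1
      refine pow_le_pow_left₀ (by linarith) ?_ k
      have : Real.log (‖w‖) ≤ Real.log (‖z‖ + R) :=
        Real.log_le_log (by linarith) hwz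
      linarith
    have htend : Tendsto (fun R : ℝ => C * (1 + Real.log (‖z‖ + R)) ^ k / R)
        atTop (𝓝 0) := by
      have hA : Tendsto
          (fun R : ℝ => (1 + Real.log (‖z‖ + R)) ^ k / (‖z‖ + R))
          atTop (𝓝 0) :=
        (polylog_aux k).comp (tendsto_atTop_add_const_left _ _ tendsto_id)
      have hB : Tendsto (fun R : ℝ => (‖z‖ + R) / R) atTop (𝓝 1) := by
        have h1 : Tendsto (fun R : ℝ => ‖z‖ * R⁻¹ + 1) atTop
            (𝓝 (‖z‖ * 0 + 1)) :=
          ((tendsto_inv_atTop_zero).const_mul _).add tendsto_const_nhds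
        rw [mul_zero, zero_add] at h1
        refine h1.congr' ?_
        filter_upwards [eventually_gt_atTop (0:ℝ)] with R hR
        field_simp
      have h := (hA.mul hB).const_mul C
      rw [zero_mul, mul_zero] at h
      refine h.congr' ?_
      filter_upwards [eventually_gt_atTop (0:ℝ)] with R hR
      have hz0 : 0 < ‖z‖ + R := by linarith
      field_simp
    have h0 : ‖deriv g z‖ ≤ 0 := ge_of_tendsto htend hkey
    simpa using le_antisymm h0 (norm_nonneg _)
  have hconst : ∀ σ τ : ℂ, g σ = g τ := fun σ τ =>
    is_const_of_deriv_eq_zero hgd hderiv σ τ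
  intro σ τ hσ hτ
  rw [← hgW σ hσ, ← hgW τ hτ]
  exact hconst σ τ
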